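/- arXiv:1412.6646 — 2 statements merged into one kernel-verified Lean document; each statement's English description precedes it below -/
import Mathlib

section
/- Let X, Y be topological spaces with continuous f : X → ℝ, g : Y → ℝ, let φ : X → Y be continuous with ‖f − g∘φ‖_∞ ≤ ε, and let γ : [0,1] → X be a path. Then height(φ∘γ) ≤ height(γ) + 2ε, where height of a path δ is sup_t h(δ(t)) − inf_t h(δ(t)) for the relevant function h. Consequently d_g(φ(x), φ(x')) ≤ d_f(x, x') + 2ε for all x, x' ∈ X. -/
open unitInterval

/-- The path-height distance (see `pathHeightDist`). -/
noncomputable def pathHeightDist {X : Type*} [TopologicalSpace X] (f : X → ℝ)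
    (u v : X) : ENNReal :=
  ⨅ (π : Path u v), EMetric.diam (Set.range fun t : I => f (π t))

/-- If `‖f − g∘φ‖_∞ ≤ ε`, then for any path `γ` in `X` the height of `φ∘γ` (with respect
to `g`) is at most the height of `γ` (with respect to `f`) plus `2ε`; consequently
`d_g(φ(x), φ(x')) ≤ d_f(x, x') + 2ε`. -/
theorem height_comp_le_and_pathHeightDist_le {X Y : Type*}
    [TopologicalSpace X] [TopologicalSpace Y]
    (f : X → ℝ) (g : Y → ℝ) (hf : Continuous f) (hg : Continuous g)
    (φ : X → Y) (hφ : Continuous φ) (ε : ℝ) (hε : 0 ≤ ε)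
    (hfφ : ∀ x, |f x - g (φ x)| ≤ ε) :
    (∀ (x x' : X) (γ : Path x x'),
      EMetric.diam (Set.range fun t : I => g (φ (γ t))) ≤
        EMetric.diam (Set.range fun t : I => f (γ t)) + ENNReal.ofReal (2 * ε)) ∧
    (∀ x x' : X,
      pathHeightDist g (φ x) (φ x') ≤ pathHeightDist f x x' + ENNReal.ofReal (2 * ε)) := by
  have key : ∀ (x x' : X) (γ : Path x x'),
      EMetric.diam (Set.range fun t : I => g (φ (γ t))) ≤
        EMetric.diam (Set.range fun t : I => f (γ t)) + ENNReal.ofReal (2 * ε) := by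
    intro x x' γ
    apply EMetric.diam_le
    rintro a ⟨s, rfl⟩ b ⟨t, rfl⟩
    have h1 : edist (g (φ (γ s))) (g (φ (γ t))) ≤
        edist (f (γ s)) (f (γ t)) + ENNReal.ofReal (2 * ε) := by
      rw [edist_dist, edist_dist, Real.dist_eq, Real.dist_eq, ← ENNReal.ofReal_add (abs_nonneg _) (by positivity)]
      apply ENNReal.ofReal_le_ofReal
      have hs := hfφ (γ s)
      have ht := hfφ (γ t)
      have : g (φ (γ s)) - g (φ (γ t)) =
          (g (φ (γ s)) - f (γ s)) + (f (γ s) - f (γ t)) + (f (γ t) - g (φ (γ t))) := by ring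
      rw [this]
      calc |(g (φ (γ s)) - f (γ s)) + (f (γ s) - f (γ t)) + (f (γ t) - g (φ (γ t)))|
          ≤ |(g (φ (γ s)) - f (γ s)) + (f (γ s) - f (γ t))| + |f (γ t) - g (φ (γ t))| := abs_add_le _ _
        _ ≤ |g (φ (γ s)) - f (γ s)| + |f (γ s) - f (γ t)| + |f (γ t) - g (φ (γ t))| := by
            exact add_le_add_left (abs_add_le _ _) _
        _ ≤ ε + |f (γ s) - f (γ t)| + ε := by
            gcongr <;> rw [abs_sub_comm] <;> first | exact hs | exact ht
        _ = |f (γ s) - f (γ t)| + 2 * ε := by ring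
    refine h1.trans (add_le_add_left ?_ _)
    exact EMetric.edist_le_diam_of_mem ⟨s, rfl⟩ ⟨t, rfl⟩
  refine ⟨key, fun x x' => ?_⟩
  rw [pathHeightDist, pathHeightDist, ENNReal.iInf_add]
  exact le_iInf fun γ => iInf_le_of_le (γ.map hφ) (key x x' γ)
end

section
/- Let X, Y be path-connected topological spaces with continuous functions f : X → ℝ, g : Y → ℝ, and let Φ : X → Y, Ψ : Y → X be continuous maps with ‖f − g∘Φ‖_∞ ≤ η and ‖g − f∘Ψ‖_∞ ≤ η, and suppose d_f(x, ΨΦ(x)) ≤ ρ for all x ∈ X and d_g(y, ΦΨ(y)) ≤ ρ for all y ∈ Y. Then for all x, x' ∈ X: |d_f(x,x') − d_g(Φ(x),Φ(x'))| ≤ 2η + 2ρ, and for all x ∈ X, y ∈ Y: |d_f(x,Ψ(y)) − d_g(Φ(x),y)| ≤ 2η + 2ρ. -/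
open unitInterval

section aux
variable {X Y : Type*} [TopologicalSpace X] [TopologicalSpace Y]

lemma phd_symm_le (f : X → ℝ) (u v : X) :
    pathHeightDist f v u ≤ pathHeightDist f u v := by
  refine le_iInf fun π => iInf_le_of_le π.symm (le_of_eq ?_)
  congr 1
  have h : (fun t : I => f (π.symm t)) = (fun t : I => f (π t)) ∘ σ := by
    funext t; simp [Path.symm]
  rw [h, unitInterval.symm_involutive.surjective.range_comp]

lemma phd_symm (f : X → ℝ) (u v : X) :
    pathHeightDist f u v = pathHeightDist f v u :=
  le_antisymm (phd_symm_le f v u) (phd_symm_le f u v)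

lemma phd_triangle (f : X → ℝ) (u v w : X) :
    pathHeightDist f u w ≤ pathHeightDist f u v + pathHeightDist f v w := by
  simp only [pathHeightDist]
  rw [ENNReal.iInf_add]
  refine le_iInf fun π1 => ?_
  rw [ENNReal.add_iInf]
  refine le_iInf fun π2 => iInf_le_of_le (π1.trans π2) ?_
  have h1 : (fun t : I => f ((π1.trans π2) t)) = f ∘ (π1.trans π2) := rfl
  have h2 : (fun t : I => f (π1 t)) = f ∘ π1 := rfl
  have h3 : (fun t : I => f (π2 t)) = f ∘ π2 := rfl
  rw [h1, h2, h3, Set.range_comp, Set.range_comp, Set.range_comp,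
    Path.trans_range, Set.image_union]
  exact EMetric.diam_union' ⟨f v, ⟨π1 1, Set.mem_range_self _, by simp⟩,
    ⟨π2 0, Set.mem_range_self _, by simp⟩⟩

lemma phd_map {f : X → ℝ} {g : Y → ℝ} {Φ : X → Y} (hΦ : Continuous Φ) {η : ℝ}
    (hη : 0 ≤ η) (h : ∀ x, |f x - g (Φ x)| ≤ η) (u v : X) :
    pathHeightDist g (Φ u) (Φ v) ≤ pathHeightDist f u v + ENNReal.ofReal (2 * η) := by
  simp only [pathHeightDist]
  rw [ENNReal.iInf_add]
  refine le_iInf fun π => iInf_le_of_le (π.map hΦ) ?_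
  refine EMetric.diam_le ?_
  rintro a ⟨t, rfl⟩ b ⟨s, rfl⟩
  simp only [Path.map_coe, Function.comp_apply]
  have habs : |g (Φ (π t)) - g (Φ (π s))| ≤ |f (π t) - f (π s)| + 2 * η := by
    have h1 := h (π t); have h2 := h (π s)
    have := abs_sub_abs_le_abs_sub (g (Φ (π t))) (g (Φ (π s)))
    calc |g (Φ (π t)) - g (Φ (π s))|
        = |(g (Φ (π t)) - f (π t)) + (f (π t) - f (π s)) + (f (π s) - g (Φ (π s)))| := by
          ring_nf
      _ ≤ |g (Φ (π t)) - f (π t)| + |f (π t) - f (π s)| + |f (π s) - g (Φ (π s))| :=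
          (abs_add_le _ _).trans (by gcongr; exact abs_add_le _ _)
      _ ≤ η + |f (π t) - f (π s)| + η := by
          gcongr
          rw [abs_sub_comm]; exact h1
      _ = |f (π t) - f (π s)| + 2 * η := by ring
  calc edist (g (Φ (π t))) (g (Φ (π s)))
      = ENNReal.ofReal |g (Φ (π t)) - g (Φ (π s))| := by
        rw [edist_dist, Real.dist_eq]
    _ ≤ ENNReal.ofReal (|f (π t) - f (π s)| + 2 * η) := ENNReal.ofReal_le_ofReal habs
    _ = ENNReal.ofReal |f (π t) - f (π s)| + ENNReal.ofReal (2 * η) := by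
        rw [ENNReal.ofReal_add (abs_nonneg _) (by positivity)]
    _ ≤ EMetric.diam (Set.range fun t : I => f (π t)) + ENNReal.ofReal (2 * η) := by
        gcongr
        rw [← Real.dist_eq, ← edist_dist]
        exact EMetric.edist_le_diam_of_mem ⟨t, rfl⟩ ⟨s, rfl⟩

end aux

/-- Distortion estimates: if `Φ`, `Ψ` approximately preserve function values (within `η`)
and the compositions `Ψ∘Φ`, `Φ∘Ψ` displace points by at most `ρ` in the path-height
pseudometrics, then `|d_f(x,x') − d_g(Φx,Φx')| ≤ 2η + 2ρ` and
`|d_f(x,Ψy) − d_g(Φx,y)| ≤ 2η + 2ρ`. -/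

theorem distortion_estimates {X Y : Type*} [TopologicalSpace X] [TopologicalSpace Y]
    (f : X → ℝ) (g : Y → ℝ) (hf : Continuous f) (hg : Continuous g)
    (hX : PathConnectedSpace X) (hY : PathConnectedSpace Y)
    (Φ : X → Y) (Ψ : Y → X) (hΦ : Continuous Φ) (hΨ : Continuous Ψ)
    (η ρ : ℝ) (hη : 0 ≤ η) (hρ : 0 ≤ ρ)
    (hfΦ : ∀ x, |f x - g (Φ x)| ≤ η) (hgΨ : ∀ y, |g y - f (Ψ y)| ≤ η)
    (hΨΦ : ∀ x, pathHeightDist f x (Ψ (Φ x)) ≤ ENNReal.ofReal ρ)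
    (hΦΨ : ∀ y, pathHeightDist g y (Φ (Ψ y)) ≤ ENNReal.ofReal ρ) :
    (∀ x x' : X,
      pathHeightDist f x x' ≤
          pathHeightDist g (Φ x) (Φ x') + ENNReal.ofReal (2 * η + 2 * ρ) ∧
      pathHeightDist g (Φ x) (Φ x') ≤
          pathHeightDist f x x' + ENNReal.ofReal (2 * η + 2 * ρ)) ∧
    (∀ (x : X) (y : Y),
      pathHeightDist f x (Ψ y) ≤
          pathHeightDist g (Φ x) y + ENNReal.ofReal (2 * η + 2 * ρ) ∧
      pathHeightDist g (Φ x) y ≤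
          pathHeightDist f x (Ψ y) + ENNReal.ofReal (2 * η + 2 * ρ)) := by
  have hmapΦ := phd_map hΦ hη hfΦ
  have hmapΨ := phd_map hΨ hη hgΨ
  set c := ENNReal.ofReal (2 * η + 2 * ρ) with hc
  have hc1 : ENNReal.ofReal ρ + ENNReal.ofReal (2 * η) + ENNReal.ofReal ρ = c := by
    rw [hc, ← ENNReal.ofReal_add hρ (by positivity),
      ← ENNReal.ofReal_add (by positivity) hρ]
    congr 1; ring
  have hc2 : ENNReal.ofReal ρ + ENNReal.ofReal (2 * η) ≤ c := by
    rw [hc, ← ENNReal.ofReal_add hρ (by positivity)]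
    exact ENNReal.ofReal_le_ofReal (by linarith)
  have hc3 : ENNReal.ofReal (2 * η) ≤ c :=
    ENNReal.ofReal_le_ofReal (by linarith)
  have hc4 : ENNReal.ofReal (2 * η) + ENNReal.ofReal ρ ≤ c := by
    rw [hc, ← ENNReal.ofReal_add (by positivity) hρ]
    exact ENNReal.ofReal_le_ofReal (by linarith)
  constructor
  · intro x x'
    constructor
    · calc pathHeightDist f x x'
          ≤ pathHeightDist f x (Ψ (Φ x)) + pathHeightDist f (Ψ (Φ x)) x' :=
            phd_triangle f _ _ _
        _ ≤ ENNReal.ofReal ρ +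
              (pathHeightDist f (Ψ (Φ x)) (Ψ (Φ x')) + pathHeightDist f (Ψ (Φ x')) x') := by
            gcongr
            · exact hΨΦ x
            · exact phd_triangle f _ _ _
        _ ≤ ENNReal.ofReal ρ +
              ((pathHeightDist g (Φ x) (Φ x') + ENNReal.ofReal (2 * η)) + ENNReal.ofReal ρ) := by
            gcongr
            · exact hmapΨ (Φ x) (Φ x')
            · rw [phd_symm]; exact hΨΦ x'
        _ = pathHeightDist g (Φ x) (Φ x') +
              (ENNReal.ofReal ρ + ENNReal.ofReal (2 * η) + ENNReal.ofReal ρ) := by ring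
        _ = pathHeightDist g (Φ x) (Φ x') + c := by rw [hc1]
    · exact (hmapΦ x x').trans (add_le_add_right hc3 _)
  · intro x y
    constructor
    · calc pathHeightDist f x (Ψ y)
          ≤ pathHeightDist f x (Ψ (Φ x)) + pathHeightDist f (Ψ (Φ x)) (Ψ y) :=
            phd_triangle f _ _ _
        _ ≤ ENNReal.ofReal ρ + (pathHeightDist g (Φ x) y + ENNReal.ofReal (2 * η)) := by
            gcongr
            · exact hΨΦ x
            · exact hmapΨ (Φ x) y
        _ = pathHeightDist g (Φ x) y + (ENNReal.ofReal ρ + ENNReal.ofReal (2 * η)) := by ring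
        _ ≤ pathHeightDist g (Φ x) y + c := add_le_add_right hc2 _
    · calc pathHeightDist g (Φ x) y
          ≤ pathHeightDist g (Φ x) (Φ (Ψ y)) + pathHeightDist g (Φ (Ψ y)) y :=
            phd_triangle g _ _ _
        _ ≤ (pathHeightDist f x (Ψ y) + ENNReal.ofReal (2 * η)) + ENNReal.ofReal ρ := by
            gcongr
            · exact hmapΦ x (Ψ y)
            · rw [phd_symm]; exact hΦΨ y
        _ = pathHeightDist f x (Ψ y) + (ENNReal.ofReal (2 * η) + ENNReal.ofReal ρ) := by ring
        _ ≤ pathHeightDist f x (Ψ y) + c := add_le_add_right hc4 _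
end
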